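/- Let $c_0, c_1 > 0$ and let $q_1, q_2 : [0,1] \to \mathbb{R}$ be measurable with $c_0 \le q_j(x) \le c_1$ on $[0,1]$, $j=1,2$. For each $k > 0$ let $u_j(\cdot,k)$ be the continuous solution of $u_j(x,k) = 1 + k^2 \int_0^x (x-s) q_j(s) u_j(s,k)\,ds$. Let $h : [0,1] \to \mathbb{R}$ be integrable and let $0 \le z < 1$. Suppose $h(x) \ge 0$ for almost every $x \in [z,1]$ and $\int_0^1 h(x) u_1(x,k) u_2(x,k)\,dx = 0$ for every $k > 0$. Then $h(x) = 0$ for almost every $x \in [z,1]$. -/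

import Mathlib

open MeasureTheory intervalIntegral


section Volterra
variable {c0 c1 k : ℝ} {q u : ℝ → ℝ}

lemma volterra_intInt (hc0 : 0 < c0)
    (hq_meas : Measurable q) (hq_bnd : ∀ x ∈ Set.Icc (0:ℝ) 1, c0 ≤ q x ∧ q x ≤ c1)
    (hu_cont : ContinuousOn u (Set.Icc 0 1)) {x y : ℝ}
    (hx : x ∈ Set.Icc (0:ℝ) 1) (hy : y ∈ Set.Icc (0:ℝ) 1) (hc : c ∈ Set.Icc (0:ℝ) 1) :
    IntervalIntegrable (fun s => (c - s) * q s * u s) volume x y := by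
  obtain ⟨Mu, hMu⟩ := isCompact_Icc.exists_bound_of_continuousOn hu_cont
  apply IntegrableOn.intervalIntegrable
  have hsub : Set.uIcc x y ⊆ Set.Icc 0 1 := Set.uIcc_subset_Icc hx hy
  apply MeasureTheory.IntegrableOn.mono_set _ hsub
  have hmeas : AEStronglyMeasurable (fun s => (c - s) * q s * u s)
      (volume.restrict (Set.Icc (0:ℝ) 1)) := by
    apply AEMeasurable.aestronglyMeasurable
    exact (((measurable_const.sub measurable_id).mul hq_meas).aemeasurable.mul
      (hu_cont.aemeasurable measurableSet_Icc))
  have hc1' : 0 < c1 := lt_of_lt_of_le hc0 (le_trans (hq_bnd 0 (by norm_num)).1 (hq_bnd 0 (by norm_num)).2)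
  apply Integrable.mono' (g := fun _ => 1 * c1 * Mu) (integrable_const _) hmeas
  rw [ae_restrict_iff' measurableSet_Icc]
  filter_upwards with s hs
  have h1 : |c - s| ≤ 1 := by
    rw [abs_le]; constructor <;> [skip; skip] <;>
      · cases hc with | intro hc1 hc2 => cases hs with | intro hs1 hs2 => linarith
  have h2 : |q s| ≤ c1 := by
    have := hq_bnd s hs; rw [abs_le]; constructor <;> linarith [this.1, this.2]
  have h3 : |u s| ≤ Mu := hMu s hs
  have hMu0 : 0 ≤ Mu := le_trans (abs_nonneg _) h3
  calc ‖(c - s) * q s * u s‖ = |c - s| * |q s| * |u s| := by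
        simp [Real.norm_eq_abs, abs_mul]
    _ ≤ 1 * c1 * Mu := by
        apply mul_le_mul _ h3 (abs_nonneg _) (by positivity)
        exact mul_le_mul h1 h2 (abs_nonneg _) (by norm_num)

lemma volterra_one_le (hc0 : 0 < c0)
    (hq_meas : Measurable q) (hq_bnd : ∀ x ∈ Set.Icc (0:ℝ) 1, c0 ≤ q x ∧ q x ≤ c1)
    (hu_cont : ContinuousOn u (Set.Icc 0 1))
    (hu : ∀ x ∈ Set.Icc (0:ℝ) 1, u x = 1 + k ^ 2 * ∫ s in (0:ℝ)..x, (x - s) * q s * u s) :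
    ∀ x ∈ Set.Icc (0:ℝ) 1, 1 ≤ u x := by
  have hpos : ∀ x ∈ Set.Icc (0:ℝ) 1, 0 < u x := by
    by_contra hcon
    push_neg at hcon
    set S : Set ℝ := Set.Icc (0:ℝ) 1 ∩ u ⁻¹' (Set.Iic 0) with hS
    have hSne : S.Nonempty := by
      obtain ⟨x, hx, hx0⟩ := hcon; exact ⟨x, hx, hx0⟩
    have hScl : IsClosed S := hu_cont.preimage_isClosed_of_isClosed isClosed_Icc isClosed_Iic
    have hSbdd : BddBelow S := ⟨0, fun x hx => hx.1.1⟩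
    set t := sInf S with ht
    have htS : t ∈ S := hScl.csInf_mem hSne hSbdd
    have ht01 : t ∈ Set.Icc (0:ℝ) 1 := htS.1
    have hut : u t ≤ 0 := htS.2
    have hlt : ∀ s, 0 ≤ s → s < t → 0 < u s := by
      intro s hs0 hst
      by_contra hus
      push_neg at hus
      have : s ∈ S := ⟨⟨hs0, le_trans hst.le ht01.2⟩, hus⟩
      exact absurd (csInf_le hSbdd this) (not_le.mpr hst)
    have : 1 ≤ u t := by
      rw [hu t ht01]
      have : 0 ≤ ∫ s in (0:ℝ)..t, (t - s) * q s * u s := by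
        apply intervalIntegral.integral_nonneg ht01.1
        intro s hs
        rcases eq_or_lt_of_le hs.2 with hst | hst
        · simp [hst]
        · have hq := (hq_bnd s ⟨hs.1, le_trans hst.le ht01.2⟩).1
          have := hlt s hs.1 hst
          have h1 : (0:ℝ) ≤ t - s := by linarith
          exact mul_nonneg (mul_nonneg h1 (by linarith)) this.le
      nlinarith [sq_nonneg k]
    linarith
  intro x hx
  rw [hu x hx]
  have : 0 ≤ ∫ s in (0:ℝ)..x, (x - s) * q s * u s := by
    apply intervalIntegral.integral_nonneg hx.1
    intro s hs
    have hs01 : s ∈ Set.Icc (0:ℝ) 1 := ⟨hs.1, le_trans hs.2 hx.2⟩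
    have hq := (hq_bnd s hs01).1
    have := hpos s hs01
    have h1 : (0:ℝ) ≤ x - s := by linarith [hs.2]
    exact mul_nonneg (mul_nonneg h1 (by linarith)) this.le
  nlinarith [sq_nonneg k]


lemma volterra_mono (hc0 : 0 < c0)
    (hq_meas : Measurable q) (hq_bnd : ∀ x ∈ Set.Icc (0:ℝ) 1, c0 ≤ q x ∧ q x ≤ c1)
    (hu_cont : ContinuousOn u (Set.Icc 0 1))
    (hu : ∀ x ∈ Set.Icc (0:ℝ) 1, u x = 1 + k ^ 2 * ∫ s in (0:ℝ)..x, (x - s) * q s * u s) :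
    ∀ x ∈ Set.Icc (0:ℝ) 1, ∀ y ∈ Set.Icc (0:ℝ) 1, x ≤ y →
      u x + k ^ 2 * ∫ s in x..y, (y - s) * q s * u s ≤ u y := by
  intro x hx y hy hxy
  have hone := volterra_one_le hc0 hq_meas hq_bnd hu_cont hu
  have h01 : (0:ℝ) ∈ Set.Icc (0:ℝ) 1 := by norm_num
  have i1 : IntervalIntegrable (fun s => (y - s) * q s * u s) volume 0 x :=
    volterra_intInt hc0 hq_meas hq_bnd hu_cont h01 hx hy
  have i2 : IntervalIntegrable (fun s => (y - s) * q s * u s) volume x y :=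
    volterra_intInt hc0 hq_meas hq_bnd hu_cont hx hy hy
  have i3 : IntervalIntegrable (fun s => (x - s) * q s * u s) volume 0 x :=
    volterra_intInt hc0 hq_meas hq_bnd hu_cont h01 hx hx
  have hsplit : (∫ s in (0:ℝ)..x, (y - s) * q s * u s) + ∫ s in x..y, (y - s) * q s * u s
      = ∫ s in (0:ℝ)..y, (y - s) * q s * u s :=
    intervalIntegral.integral_add_adjacent_intervals i1 i2
  have hmono : (∫ s in (0:ℝ)..x, (x - s) * q s * u s)
      ≤ ∫ s in (0:ℝ)..x, (y - s) * q s * u s := by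
    apply intervalIntegral.integral_mono_on hx.1 i3 i1
    intro s hs
    have hs01 : s ∈ Set.Icc (0:ℝ) 1 := ⟨hs.1, le_trans hs.2 hx.2⟩
    have hqu : 0 ≤ q s * u s :=
      mul_nonneg (le_trans hc0.le (hq_bnd s hs01).1) (by linarith [hone s hs01])
    rw [mul_assoc, mul_assoc]
    exact mul_le_mul_of_nonneg_right (by linarith) hqu
  rw [hu x hx, hu y hy, ← hsplit]
  nlinarith [sq_nonneg k]

lemma volterra_mono' (hc0 : 0 < c0)
    (hq_meas : Measurable q) (hq_bnd : ∀ x ∈ Set.Icc (0:ℝ) 1, c0 ≤ q x ∧ q x ≤ c1)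
    (hu_cont : ContinuousOn u (Set.Icc 0 1))
    (hu : ∀ x ∈ Set.Icc (0:ℝ) 1, u x = 1 + k ^ 2 * ∫ s in (0:ℝ)..x, (x - s) * q s * u s) :
    ∀ x ∈ Set.Icc (0:ℝ) 1, ∀ y ∈ Set.Icc (0:ℝ) 1, x ≤ y → u x ≤ u y := by
  intro x hx y hy hxy
  have hone := volterra_one_le hc0 hq_meas hq_bnd hu_cont hu
  have key := volterra_mono hc0 hq_meas hq_bnd hu_cont hu x hx y hy hxy
  have h2 : 0 ≤ ∫ s in x..y, (y - s) * q s * u s := by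
    apply intervalIntegral.integral_nonneg hxy
    intro s hs
    have hs01 : s ∈ Set.Icc (0:ℝ) 1 := ⟨le_trans hx.1 hs.1, le_trans hs.2 hy.2⟩
    exact mul_nonneg (mul_nonneg (by linarith [hs.2]) (le_trans hc0.le (hq_bnd s hs01).1))
      (by linarith [hone s hs01])
  nlinarith [sq_nonneg k]

lemma volterra_growth (hc0 : 0 < c0)
    (hq_meas : Measurable q) (hq_bnd : ∀ x ∈ Set.Icc (0:ℝ) 1, c0 ≤ q x ∧ q x ≤ c1)
    (hu_cont : ContinuousOn u (Set.Icc 0 1))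
    (hu : ∀ x ∈ Set.Icc (0:ℝ) 1, u x = 1 + k ^ 2 * ∫ s in (0:ℝ)..x, (x - s) * q s * u s)
    {z a : ℝ} (hz : z ∈ Set.Icc (0:ℝ) 1) (ha : a ∈ Set.Icc (0:ℝ) 1) (hza : z ≤ a) :
    u z * (1 + k ^ 2 * c0 * (a - z) ^ 2 / 2) ≤ u a := by
  have hone := volterra_one_le hc0 hq_meas hq_bnd hu_cont hu
  have key := volterra_mono hc0 hq_meas hq_bnd hu_cont hu z hz a ha hza
  have hmono := volterra_mono' hc0 hq_meas hq_bnd hu_cont hu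
  have i2 : IntervalIntegrable (fun s => (a - s) * q s * u s) volume z a :=
    volterra_intInt hc0 hq_meas hq_bnd hu_cont hz ha ha
  have ilin : IntervalIntegrable (fun s => (a - s) * (c0 * u z)) volume z a :=
    (Continuous.intervalIntegrable (by continuity) z a)
  have hlow : (∫ s in z..a, (a - s) * (c0 * u z))
      ≤ ∫ s in z..a, (a - s) * q s * u s := by
    apply intervalIntegral.integral_mono_on hza ilin i2
    intro s hs
    have hs01 : s ∈ Set.Icc (0:ℝ) 1 := ⟨le_trans hz.1 hs.1, le_trans hs.2 ha.2⟩
    have h1 : (0:ℝ) ≤ a - s := by linarith [hs.2]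
    have h2 : c0 ≤ q s := (hq_bnd s hs01).1
    have h3 : u z ≤ u s := hmono z hz s hs01 hs.1
    have h4 : (1:ℝ) ≤ u z := hone z hz
    rw [mul_assoc]
    exact mul_le_mul_of_nonneg_left (by nlinarith) h1
  have hcalc : (∫ s in z..a, (a - s) * (c0 * u z)) = (a - z) ^ 2 / 2 * (c0 * u z) := by
    rw [intervalIntegral.integral_mul_const]
    congr 1
    have h1 : (∫ s in z..a, (a - s)) = (∫ s in z..a, a) - ∫ s in z..a, s :=
      intervalIntegral.integral_sub intervalIntegrable_const intervalIntegrable_id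
    rw [h1, intervalIntegral.integral_const, integral_id]
    simp [smul_eq_mul]; ring
  nlinarith [sq_nonneg k, hcalc ▸ hlow]

end Volterra

set_option maxHeartbeats 1000000

/-- If `h` is integrable on `[0,1]`, nonnegative a.e. on `[z,1]`, and
orthogonal to all products `u₁(·,k)u₂(·,k)` of Volterra solutions, then `h = 0`
a.e. on `[z,1]`. -/
theorem orthogonality_kills_h_on_last_interval
    (c0 c1 : ℝ) (hc0 : 0 < c0) (hc1 : 0 < c1)
    (q1 q2 : ℝ → ℝ) (hq1_meas : Measurable q1) (hq2_meas : Measurable q2)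
    (hq1_bnd : ∀ x ∈ Set.Icc (0:ℝ) 1, c0 ≤ q1 x ∧ q1 x ≤ c1)
    (hq2_bnd : ∀ x ∈ Set.Icc (0:ℝ) 1, c0 ≤ q2 x ∧ q2 x ≤ c1)
    (u1 u2 : ℝ → ℝ → ℝ)
    (hu1_cont : ∀ k > 0, ContinuousOn (u1 k) (Set.Icc (0:ℝ) 1))
    (hu2_cont : ∀ k > 0, ContinuousOn (u2 k) (Set.Icc (0:ℝ) 1))
    (hu1 : ∀ k > 0, ∀ x ∈ Set.Icc (0:ℝ) 1,
      u1 k x = 1 + k ^ 2 * ∫ s in (0:ℝ)..x, (x - s) * q1 s * u1 k s)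
    (hu2 : ∀ k > 0, ∀ x ∈ Set.Icc (0:ℝ) 1,
      u2 k x = 1 + k ^ 2 * ∫ s in (0:ℝ)..x, (x - s) * q2 s * u2 k s)
    (h : ℝ → ℝ) (hh_int : IntegrableOn h (Set.Icc (0:ℝ) 1))
    (z : ℝ) (hz0 : 0 ≤ z) (hz1 : z < 1)
    (hh_nonneg : ∀ᵐ x, x ∈ Set.Icc z 1 → 0 ≤ h x)
    (horth : ∀ k > (0:ℝ), ∫ x in (0:ℝ)..1, h x * u1 k x * u2 k x = 0) :
    ∀ᵐ x, x ∈ Set.Icc z 1 → h x = 0 := by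
  obtain ⟨M, hMdef⟩ : ∃ M : ℝ, M = ∫ x in Set.Icc (0:ℝ) 1, |h x| := ⟨_, rfl⟩
  have hM0 : 0 ≤ M := hMdef ▸ setIntegral_nonneg measurableSet_Icc (fun x _ => abs_nonneg _)
  -- Step 1: for each a with z < a ≤ 1, the tail integral of h vanishes
  have key : ∀ a, z < a → a ≤ 1 → (∫ x in Set.Ioc a 1, h x) = 0 := by
    intro a hza ha1
    have ha01 : a ∈ Set.Icc (0:ℝ) 1 := ⟨le_trans hz0 hza.le, ha1⟩
    have hz01 : z ∈ Set.Icc (0:ℝ) 1 := ⟨hz0, hz1.le⟩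
    obtain ⟨T, hTdef⟩ : ∃ T : ℝ, T = ∫ x in Set.Ioc a 1, h x := ⟨_, rfl⟩
    have hTint : (∫ x in a..1, h x) = T := hTdef ▸ intervalIntegral.integral_of_le ha1
    have hIoc_sub : Set.Ioc a 1 ⊆ Set.Icc z 1 := fun x hx => ⟨le_trans hza.le hx.1.le, hx.2⟩
    -- T ≥ 0
    have hT0 : 0 ≤ T := by
      rw [hTdef]
      refine setIntegral_nonneg_ae measurableSet_Ioc ?_
      filter_upwards [hh_nonneg] with x hx hxa
      exact hx (hIoc_sub hxa)
    obtain ⟨γ, hγdef⟩ : ∃ g : ℝ, g = (c0 * (a - z) ^ 2 / 2) ^ 2 := ⟨_, rfl⟩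
    have hγ0 : 0 < γ := by
      have haz : (0:ℝ) < a - z := by linarith
      rw [hγdef]; positivity
    -- the crucial estimate, for each k > 0
    have main : ∀ k > (0:ℝ), T * (k ^ 4 * γ) ≤ M := by
      intro k hk
      have hc1v := hu1_cont k hk
      have hc2v := hu2_cont k hk
      have hone1 := volterra_one_le hc0 hq1_meas hq1_bnd hc1v (hu1 k hk)
      have hone2 := volterra_one_le hc0 hq2_meas hq2_bnd hc2v (hu2 k hk)
      have hm1 := volterra_mono' hc0 hq1_meas hq1_bnd hc1v (hu1 k hk)
      have hm2 := volterra_mono' hc0 hq2_meas hq2_bnd hc2v (hu2 k hk)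
      have hg1 := volterra_growth hc0 hq1_meas hq1_bnd hc1v (hu1 k hk) hz01 ha01 hza.le
      have hg2 := volterra_growth hc0 hq2_meas hq2_bnd hc2v (hu2 k hk) hz01 ha01 hza.le
      obtain ⟨E, hEdef⟩ : ∃ E : ℝ, E = 1 + k ^ 2 * c0 * (a - z) ^ 2 / 2 := ⟨_, rfl⟩
      obtain ⟨B, hBdef⟩ : ∃ B : ℝ, B = u1 k z * u2 k z := ⟨_, rfl⟩
      have hB1 : (1:ℝ) ≤ B := by
        rw [hBdef]; nlinarith [hone1 z hz01, hone2 z hz01]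
      obtain ⟨H, hHdef⟩ : ∃ H : ℝ → ℝ, H = fun x => h x * u1 k x * u2 k x := ⟨_, rfl⟩
      -- integrability of H on [0,1]
      obtain ⟨M1, hM1⟩ := isCompact_Icc.exists_bound_of_continuousOn hc1v
      obtain ⟨M2, hM2⟩ := isCompact_Icc.exists_bound_of_continuousOn hc2v
      have hM1' : 0 ≤ M1 := le_trans (norm_nonneg _) (hM1 0 (by norm_num))
      have hM2' : 0 ≤ M2 := le_trans (norm_nonneg _) (hM2 0 (by norm_num))
      have hHint : IntegrableOn H (Set.Icc (0:ℝ) 1) := by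
        apply Integrable.mono' ((hh_int.norm).mul_const (M1 * M2))
        · rw [hHdef]
          exact ((hh_int.aestronglyMeasurable.mul
            ((hc1v.aemeasurable measurableSet_Icc).aestronglyMeasurable)).mul
            ((hc2v.aemeasurable measurableSet_Icc).aestronglyMeasurable))
        · rw [ae_restrict_iff' measurableSet_Icc]
          filter_upwards with x hx
          have e1 := hM1 x hx
          have e2 := hM2 x hx
          calc ‖H x‖ = |h x| * (|u1 k x| * |u2 k x|) := by
                rw [hHdef]; simp [Real.norm_eq_abs, abs_mul, mul_assoc]
            _ ≤ |h x| * (M1 * M2) := by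
                apply mul_le_mul_of_nonneg_left _ (abs_nonneg _)
                exact mul_le_mul e1 e2 (abs_nonneg _) hM1'
            _ = ‖h x‖ * (M1 * M2) := by rw [Real.norm_eq_abs]
      have hHsub : ∀ p ∈ Set.Icc (0:ℝ) 1, ∀ r ∈ Set.Icc (0:ℝ) 1,
          IntervalIntegrable H volume p r := by
        intro p hp r hr
        exact (hHint.mono_set (Set.uIcc_subset_Icc hp hr)).intervalIntegrable
      have hhsub : ∀ p ∈ Set.Icc (0:ℝ) 1, ∀ r ∈ Set.Icc (0:ℝ) 1,
          IntervalIntegrable h volume p r := by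
        intro p hp r hr
        exact (hh_int.mono_set (Set.uIcc_subset_Icc hp hr)).intervalIntegrable
      have h01 : (0:ℝ) ∈ Set.Icc (0:ℝ) 1 := by norm_num
      have h11 : (1:ℝ) ∈ Set.Icc (0:ℝ) 1 := by norm_num
      -- split the orthogonality integral
      have hsplit : (∫ x in (0:ℝ)..z, H x) + (∫ x in z..a, H x) + (∫ x in a..1, H x) = 0 := by
        rw [intervalIntegral.integral_add_adjacent_intervals (hHsub 0 h01 z hz01) (hHsub z hz01 a ha01),
          intervalIntegral.integral_add_adjacent_intervals (hHsub 0 h01 a ha01) (hHsub a ha01 1 h11)]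
        rw [hHdef]
        exact horth k hk
      -- bound 1 : -(M*B) ≤ ∫_0^z H
      have bound1 : -(M * B) ≤ ∫ x in (0:ℝ)..z, H x := by
        have e1 : |∫ x in (0:ℝ)..z, H x| ≤ ∫ x in (0:ℝ)..z, |H x| :=
          intervalIntegral.abs_integral_le_integral_abs hz0
        have e2 : (∫ x in (0:ℝ)..z, |H x|) ≤ ∫ x in (0:ℝ)..z, |h x| * B := by
          apply intervalIntegral.integral_mono_on hz0 (hHsub 0 h01 z hz01).abs
            (((hhsub 0 h01 z hz01).abs).mul_const B)
          intro x hx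
          have hx01 : x ∈ Set.Icc (0:ℝ) 1 := ⟨hx.1, le_trans hx.2 hz1.le⟩
          have p1 := hone1 x hx01
          have p2 := hone2 x hx01
          have q1le := hm1 x hx01 z hz01 hx.2
          have q2le := hm2 x hx01 z hz01 hx.2
          calc |H x| = |h x| * (u1 k x * u2 k x) := by
                rw [hHdef]; rw [abs_mul, abs_mul, mul_assoc]
                congr 1
                rw [abs_of_nonneg (by linarith), abs_of_nonneg (by linarith)]
            _ ≤ |h x| * B := by
                apply mul_le_mul_of_nonneg_left _ (abs_nonneg _)
                rw [hBdef]; nlinarith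
        have e3 : (∫ x in (0:ℝ)..z, |h x| * B) ≤ M * B := by
          rw [intervalIntegral.integral_mul_const]
          apply mul_le_mul_of_nonneg_right _ (by linarith)
          rw [intervalIntegral.integral_of_le hz0, hMdef]
          apply setIntegral_mono_set hh_int.abs
          · filter_upwards with x using abs_nonneg _
          · exact HasSubset.Subset.eventuallyLE (fun x hx =>
              ⟨hx.1.le, le_trans hx.2 hz1.le⟩)
        have := abs_le.mp (le_trans e1 (le_trans e2 e3))
        linarith [this.1]
      -- bound 2 : 0 ≤ ∫_z^a H
      have bound2 : 0 ≤ ∫ x in z..a, H x := by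
        apply intervalIntegral.integral_nonneg_of_ae_restrict hza.le
        rw [Filter.EventuallyLE, ae_restrict_iff' measurableSet_Icc]
        filter_upwards [hh_nonneg] with x hx hxa
        have hx01 : x ∈ Set.Icc (0:ℝ) 1 := ⟨le_trans hz0 hxa.1, le_trans hxa.2 ha1⟩
        have hhx : 0 ≤ h x := hx ⟨hxa.1, le_trans hxa.2 ha1⟩
        have p1 := hone1 x hx01
        have p2 := hone2 x hx01
        have hHx : H x = h x * u1 k x * u2 k x := by rw [hHdef]
        show (0:ℝ) ≤ H x
        rw [hHx]
        exact mul_nonneg (mul_nonneg hhx (by linarith)) (by linarith)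
      -- bound 3 : T * (B * E^2) ≤ ∫_a^1 H
      have bound3 : T * (B * E ^ 2) ≤ ∫ x in a..1, H x := by
        rw [← hTint, ← intervalIntegral.integral_mul_const]
        apply intervalIntegral.integral_mono_ae_restrict ha1
          ((hhsub a ha01 1 h11).mul_const _) (hHsub a ha01 1 h11)
        rw [Filter.EventuallyLE, ae_restrict_iff' measurableSet_Icc]
        filter_upwards [hh_nonneg] with x hx hxa
        have hx01 : x ∈ Set.Icc (0:ℝ) 1 := ⟨le_trans hz0 (le_trans hza.le hxa.1), hxa.2⟩
        have hhx : 0 ≤ h x := hx ⟨le_trans hza.le hxa.1, hxa.2⟩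
        have p1 := hone1 x hx01
        have p2 := hone2 x hx01
        have r1 : u1 k a ≤ u1 k x := hm1 a ha01 x hx01 hxa.1
        have r2 : u2 k a ≤ u2 k x := hm2 a ha01 x hx01 hxa.1
        have g1 : u1 k z * E ≤ u1 k a := by rw [hEdef]; exact hg1
        have g2 : u2 k z * E ≤ u2 k a := by rw [hEdef]; exact hg2
        have pz1 := hone1 z hz01
        have pz2 := hone2 z hz01
        have pa1 := hone1 a ha01
        have pa2 := hone2 a ha01
        have hE0 : (0:ℝ) ≤ k ^ 2 * c0 * (a - z) ^ 2 / 2 :=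
          div_nonneg (mul_nonneg (mul_nonneg (sq_nonneg k) hc0.le) (sq_nonneg _)) (by norm_num)
        have hE1 : (1:ℝ) ≤ E := by rw [hEdef]; linarith
        have hkey : B * E ^ 2 ≤ u1 k x * u2 k x := by
          have e0 : 0 ≤ u2 k z * E := by nlinarith
          have step1 : (u1 k z * E) * (u2 k z * E) ≤ u1 k a * u2 k a :=
            mul_le_mul g1 g2 e0 (by linarith)
          have step2 : u1 k a * u2 k a ≤ u1 k x * u2 k x :=
            mul_le_mul r1 r2 (by linarith) (by linarith)
          calc B * E ^ 2 = (u1 k z * E) * (u2 k z * E) := by rw [hBdef]; ring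
            _ ≤ u1 k x * u2 k x := le_trans step1 step2
        have hHx : H x = h x * u1 k x * u2 k x := by rw [hHdef]
        show h x * (B * E ^ 2) ≤ H x
        rw [hHx]
        calc h x * (B * E ^ 2) ≤ h x * (u1 k x * u2 k x) :=
              mul_le_mul_of_nonneg_left hkey hhx
          _ = h x * u1 k x * u2 k x := by ring
      -- combine
      have hcomb : T * (B * E ^ 2) ≤ M * B := by
        linarith [bound1, bound2, bound3, hsplit]
      have hE0 : (0:ℝ) ≤ k ^ 2 * c0 * (a - z) ^ 2 / 2 :=
        div_nonneg (mul_nonneg (mul_nonneg (sq_nonneg k) hc0.le) (sq_nonneg _)) (by norm_num)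
      have hE2 : k ^ 4 * γ ≤ E ^ 2 := by
        have hle : k ^ 2 * c0 * (a - z) ^ 2 / 2 ≤ E := by rw [hEdef]; linarith
        have h2 : (k ^ 2 * c0 * (a - z) ^ 2 / 2) ^ 2 ≤ E ^ 2 := pow_le_pow_left₀ hE0 hle 2
        calc k ^ 4 * γ = (k ^ 2 * c0 * (a - z) ^ 2 / 2) ^ 2 := by rw [hγdef]; ring
          _ ≤ E ^ 2 := h2
      have hTk : T * (k ^ 4 * γ) * B ≤ M * B := by
        calc T * (k ^ 4 * γ) * B ≤ T * E ^ 2 * B := by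
              apply mul_le_mul_of_nonneg_right _ (by linarith)
              exact mul_le_mul_of_nonneg_left hE2 hT0
          _ = T * (B * E ^ 2) := by ring
          _ ≤ M * B := hcomb
      exact le_of_mul_le_mul_right hTk (by linarith)
    -- conclude T = 0
    rw [← hTdef]
    by_contra hTne
    have hTpos : 0 < T := lt_of_le_of_ne hT0 (Ne.symm hTne)
    obtain ⟨k, hkdef⟩ : ∃ k : ℝ, k = max 1 (M / (γ * T) + 1) := ⟨_, rfl⟩
    have hk1 : (1:ℝ) ≤ k := hkdef ▸ le_max_left _ _
    have hk0 : (0:ℝ) < k := by linarith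
    have hkM : M / (γ * T) < k := hkdef ▸ lt_of_lt_of_le (by linarith) (le_max_right _ _)
    have hk4 : k ≤ k ^ 4 := le_self_pow₀ (by linarith) (by norm_num)
    have := main k hk0
    have hgt : M < T * (k ^ 4 * γ) := by
      have h1 : M < k * (γ * T) := (div_lt_iff₀ (by positivity)).mp hkM
      calc M < k * (γ * T) := h1
        _ ≤ k ^ 4 * (γ * T) := by nlinarith
        _ = T * (k ^ 4 * γ) := by ring
    linarith
  -- Step 2: pass to the limit a ↓ z
  have hIoc_int : IntegrableOn h (Set.Ioc z 1) :=
    hh_int.mono_set (fun x hx => ⟨le_trans hz0 hx.1.le, hx.2⟩)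
  have hzero : (∫ x in Set.Ioc z 1, h x) = 0 := by
    obtain ⟨s, hsdef⟩ : ∃ s : ℕ → Set ℝ, s = fun n : ℕ => Set.Ioc (z + (1 - z) / ((n:ℝ) + 1)) 1 := ⟨_, rfl⟩
    have hsm : ∀ n, MeasurableSet (s n) := fun n => hsdef ▸ measurableSet_Ioc
    have hmono : Monotone s := by
      intro m n hmn
      rw [hsdef]
      apply Set.Ioc_subset_Ioc_left
      apply add_le_add_right
      apply div_le_div_of_nonneg_left (by linarith) (by positivity)
      exact_mod_cast by exact_mod_cast add_le_add_left (Nat.cast_le.mpr hmn) 1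
    have hunion : (⋃ n, s n) = Set.Ioc z 1 := by
      rw [hsdef]
      apply Set.Subset.antisymm
      · apply Set.iUnion_subset
        intro n x hx
        have hpos : (0:ℝ) < (1 - z) / ((n:ℝ) + 1) := div_pos (by linarith) (by positivity)
        exact ⟨lt_of_le_of_lt (by linarith) hx.1, hx.2⟩
      · intro x hx
        obtain ⟨n, hn⟩ := exists_nat_gt ((1 - z) / (x - z))
        refine Set.mem_iUnion.mpr ⟨n, ⟨?_, hx.2⟩⟩
        have hxz : 0 < x - z := by linarith [hx.1]
        have : (1 - z) / (x - z) < n + 1 := by linarith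
        have := (div_lt_iff₀ hxz).mp this
        have hlt : (1 - z) / (n + 1) < x - z := by
          rw [div_lt_iff₀ (by positivity)]
          linarith
        linarith
    have hint : IntegrableOn h (⋃ n, s n) := hunion ▸ hIoc_int
    have htend := tendsto_setIntegral_of_monotone hsm hmono hint
    have hvals : ∀ n, (∫ x in s n, h x) = 0 := by
      intro n
      rw [hsdef]
      apply key
      · have : (0:ℝ) < (1 - z) / ((n:ℝ) + 1) := div_pos (by linarith) (by positivity)
        linarith
      · have h1 : (1 - z) / ((n:ℝ) + 1) ≤ 1 - z := by
          apply div_le_self (by linarith) (by exact_mod_cast Nat.le_add_left 1 n)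
        linarith
    rw [hunion] at htend
    have : Filter.Tendsto (fun n : ℕ => (0:ℝ)) Filter.atTop (nhds (∫ x in Set.Ioc z 1, h x)) := by
      convert htend using 1
      ext n; exact (hvals n).symm
    exact (tendsto_nhds_unique tendsto_const_nhds this).symm
  -- Step 3: a.e. zero
  have hnn : 0 ≤ᶠ[ae (volume.restrict (Set.Ioc z 1))] h := by
    rw [Filter.EventuallyLE, ae_restrict_iff' measurableSet_Ioc]
    filter_upwards [hh_nonneg] with x hx hxa
    exact hx ⟨hxa.1.le, hxa.2⟩
  have hae := (setIntegral_eq_zero_iff_of_nonneg_ae hnn hIoc_int).mp hzero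
  rw [Filter.EventuallyEq, ae_restrict_iff' measurableSet_Ioc] at hae
  have hz_ne : ∀ᵐ x : ℝ, x ≠ z := by
    have hsing : (volume : Measure ℝ) {z} = 0 := measure_singleton z
    rw [ae_iff]
    simpa [Set.setOf_eq_eq_singleton] using hsing
  filter_upwards [hae, hz_ne] with x hx hxz hxmem
  apply hx
  exact ⟨lt_of_le_of_ne hxmem.1 (Ne.symm hxz), hxmem.2⟩
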